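/- Let N ≥ 2, let u be a Lebesgue-measurable real-valued function defined almost everywhere on ℝ^N, let a ∈ ℝ^N be a point where u is defined, and let v ∈ ℝ^N. If u is differentiable at a in the capacity sense with gradient v, i.e. lim_{r→0} r^{-(N-1)} sup_{t>0} t · Cap({x ∈ B(a,r) : |u(x) − u(a) − v·(x−a)| > t|x−a|}) = 0, then u is differentiable at a in the weak L^{N/(N-1)} sense with the same gradient, i.e. lim_{r→0} r^{-(N-1)} sup_{t>0} t · |{x ∈ B(a,r) : |u(x) − u(a) − v·(x−a)| > t|x−a|}|^{(N-1)/N} = 0, where |·| denotes Lebesgue measure. -/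

import Mathlib

open MeasureTheory Metric Filter
open scoped ENNReal Topology NNReal

/-- The capacity (in the de la Vallée Poussin sense) associated with the kernel
`|x|^{-(N-1)}`: for compact `E`, the sup of `ν E` over positive measures `ν`
supported in `E` whose potential is everywhere at most `1`; for arbitrary sets,
the sup over compact subsets. -/
noncomputable def rieszCap (N : ℕ) (A : Set (EuclideanSpace ℝ (Fin N))) : ℝ≥0∞ :=
  ⨆ (E : Set (EuclideanSpace ℝ (Fin N))) (_ : IsCompact E) (_ : E ⊆ A)
    (ν : Measure (EuclideanSpace ℝ (Fin N))) (_ : ν Eᶜ = 0)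
    (_ : ∀ x : EuclideanSpace ℝ (Fin N),
      (∫⁻ y, (‖x - y‖₊ : ℝ≥0∞) ^ (-(N - 1 : ℝ)) ∂ν) ≤ 1), ν E

/-- For `N ≥ 2`, differentiability at a point in the capacity sense implies
differentiability at that point in the weak `L^{N/(N-1)}` sense, with the same gradient. -/
-- real computation for the annulus bound
lemma real_calc (N : ℕ) (hN : 2 ≤ N) (R : ℝ) (hR : 0 < R) (k : ℕ) :
    (R * 2⁻¹ ^ (k+1)) ^ (-((N:ℝ) - 1)) * (R * 2⁻¹ ^ k) ^ N
      = R * 2 ^ (N-1) * 2⁻¹ ^ k := by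
  obtain ⟨n, rfl⟩ : ∃ n, N = n + 2 := ⟨N - 2, by omega⟩
  have hb : (0:ℝ) < R * 2⁻¹ ^ (k+1) := by positivity
  have hcast : ((n + 2 : ℕ) : ℝ) - 1 = ((n + 1 : ℕ) : ℝ) := by push_cast; ring
  rw [hcast, Real.rpow_neg hb.le, Real.rpow_natCast]
  have h1 : n + 2 - 1 = n + 1 := by omega
  rw [h1]
  field_simp
  have h2 : ((1:ℝ)/2)^n * 2^n = 1 := by rw [← mul_pow]; norm_num
  linear_combination (-(R * (1/2:ℝ)^k)^(n+2)) * h2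

noncomputable def unitVol (N : ℕ) : ℝ≥0∞ := volume (ball (0 : EuclideanSpace ℝ (Fin N)) 1)

lemma ker_le {N : ℕ} (hN : 2 ≤ N) {x y : EuclideanSpace ℝ (Fin N)} {c : ℝ} (hc : 0 < c)
    (h : c ≤ dist y x) :
    (‖x - y‖₊ : ℝ≥0∞) ^ (-((N:ℝ) - 1)) ≤ ENNReal.ofReal (c ^ (-((N:ℝ) - 1))) := by
  have hs : (0:ℝ) ≤ (N:ℝ) - 1 := by
    have : (2:ℝ) ≤ N := by exact_mod_cast hN
    linarith
  have hbase : ENNReal.ofReal c ≤ (‖x - y‖₊ : ℝ≥0∞) := by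
    rw [← ENNReal.ofReal_coe_nnreal, coe_nnnorm]
    exact ENNReal.ofReal_le_ofReal (by rwa [norm_sub_rev, ← dist_eq_norm])
  have := ENNReal.rpow_le_rpow hbase hs
  rw [ENNReal.rpow_neg, Real.rpow_neg hc.le,
    ENNReal.ofReal_inv_of_pos (by positivity), ← ENNReal.ofReal_rpow_of_pos hc]
  exact ENNReal.inv_le_inv.mpr this

lemma lintegral_ball_ker {N : ℕ} (hN : 2 ≤ N) (x : EuclideanSpace ℝ (Fin N)) {R : ℝ}
    (hR : 0 < R) :
    ∫⁻ y in ball x R, (‖x - y‖₊ : ℝ≥0∞) ^ (-((N:ℝ) - 1))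
      ≤ ENNReal.ofReal (2 ^ N * R) * unitVol N := by
  set f : EuclideanSpace ℝ (Fin N) → ℝ≥0∞ :=
    fun y => (‖x - y‖₊ : ℝ≥0∞) ^ (-((N:ℝ) - 1)) with hf
  set A : ℕ → Set (EuclideanSpace ℝ (Fin N)) :=
    fun k => ball x (R * 2⁻¹ ^ k) \ ball x (R * 2⁻¹ ^ (k+1)) with hA
  -- covering
  have hcover : ball x R \ {x} ⊆ ⋃ k, A k := by
    intro y hy
    obtain ⟨hyb, hyx⟩ := hy
    have hd : 0 < dist y x := dist_pos.mpr (by simpa using hyx)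
    have hdR : dist y x < R := mem_ball.mp hyb
    have hex : ∃ n : ℕ, (2⁻¹:ℝ) ^ (n+1) ≤ dist y x / R := by
      obtain ⟨n, hn⟩ := exists_pow_lt_of_lt_one (div_pos hd hR) (by norm_num : (2⁻¹:ℝ) < 1)
      refine ⟨n, le_trans ?_ hn.le⟩
      exact pow_le_pow_of_le_one (by norm_num) (by norm_num) (by omega)
    set k := Nat.find hex with hk
    have hk1 : (2⁻¹:ℝ) ^ (k+1) ≤ dist y x / R := Nat.find_spec hex
    have hk2 : dist y x / R < (2⁻¹:ℝ) ^ k := by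
      rcases Nat.eq_zero_or_pos k with h0 | h0
      · rw [h0, pow_zero]; exact (div_lt_one hR).mpr hdR
      · have h3 := Nat.find_min hex (m := k - 1) (by omega)
        push_neg at h3
        calc dist y x / R < 2⁻¹ ^ (k - 1 + 1) := h3
          _ = 2⁻¹ ^ k := by congr 1; omega
    refine Set.mem_iUnion.mpr ⟨k, ?_, ?_⟩
    · rw [mem_ball]
      calc dist y x = (dist y x / R) * R := by field_simp
        _ < 2⁻¹ ^ k * R := by nlinarith
        _ = R * 2⁻¹ ^ k := by ring
    · rw [mem_ball]
      push_neg
      calc R * 2⁻¹ ^ (k+1) = 2⁻¹ ^ (k+1) * R := by ring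
        _ ≤ (dist y x / R) * R := by nlinarith
        _ = dist y x := by field_simp
  -- per-annulus bound
  have hannulus : ∀ k : ℕ, ∫⁻ y in A k, f y
      ≤ ENNReal.ofReal (R * 2 ^ (N-1) * 2⁻¹ ^ k) * unitVol N := by
    intro k
    have hc : (0:ℝ) < R * 2⁻¹ ^ (k+1) := by positivity
    have hbd : ∀ y ∈ A k, f y ≤ ENNReal.ofReal ((R * 2⁻¹ ^ (k+1)) ^ (-((N:ℝ) - 1))) := by
      intro y hy
      exact ker_le hN hc (by simpa [mem_ball, not_lt] using hy.2)
    calc ∫⁻ y in A k, f y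
        ≤ ∫⁻ _ in A k, ENNReal.ofReal ((R * 2⁻¹ ^ (k+1)) ^ (-((N:ℝ) - 1))) :=
          setLIntegral_mono' (measurableSet_ball.diff measurableSet_ball) hbd
      _ = ENNReal.ofReal ((R * 2⁻¹ ^ (k+1)) ^ (-((N:ℝ) - 1))) * volume (A k) :=
          setLIntegral_const _ _
      _ ≤ ENNReal.ofReal ((R * 2⁻¹ ^ (k+1)) ^ (-((N:ℝ) - 1))) * volume (ball x (R * 2⁻¹ ^ k)) :=
          mul_le_mul_right (measure_mono Set.diff_subset) _
      _ = ENNReal.ofReal ((R * 2⁻¹ ^ (k+1)) ^ (-((N:ℝ) - 1))) *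
            (ENNReal.ofReal ((R * 2⁻¹ ^ k) ^ N) * unitVol N) := by
          rw [Measure.addHaar_ball_of_pos _ x (by positivity), finrank_euclideanSpace_fin]
          rfl
      _ = ENNReal.ofReal (R * 2 ^ (N-1) * 2⁻¹ ^ k) * unitVol N := by
          rw [← mul_assoc, ← ENNReal.ofReal_mul (by positivity), real_calc N hN R hR k]
  -- sum up
  haveI : Nonempty (Fin N) := ⟨⟨0, by omega⟩⟩
  haveI : Nontrivial (EuclideanSpace ℝ (Fin N)) := inferInstance
  calc ∫⁻ y in ball x R, f y = ∫⁻ y in ball x R \ {x}, f y := by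
        refine (setLIntegral_congr ?_).symm
        exact MeasureTheory.diff_ae_eq_self.mpr
          (measure_mono_null Set.inter_subset_right (measure_singleton x))
    _ ≤ ∫⁻ y in ⋃ k, A k, f y := lintegral_mono_set hcover
    _ ≤ ∑' k, ∫⁻ y in A k, f y := lintegral_iUnion_le _ _
    _ ≤ ∑' k, ENNReal.ofReal (R * 2 ^ (N-1) * 2⁻¹ ^ k) * unitVol N :=
        ENNReal.tsum_le_tsum fun k => hannulus k
    _ = (∑' k : ℕ, ENNReal.ofReal (R * 2 ^ (N-1)) * (2⁻¹:ℝ≥0∞) ^ k) * unitVol N := by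
        rw [ENNReal.tsum_mul_right]
        congr 1
        refine tsum_congr fun k => ?_
        rw [ENNReal.ofReal_mul (by positivity), ENNReal.ofReal_pow (by norm_num),
          ENNReal.ofReal_inv_of_pos (by norm_num), ENNReal.ofReal_ofNat]
    _ = ENNReal.ofReal (R * 2 ^ (N-1)) * (1 - 2⁻¹)⁻¹ * unitVol N := by
        rw [ENNReal.tsum_mul_left, ENNReal.tsum_geometric]
    _ = ENNReal.ofReal (2 ^ N * R) * unitVol N := by
        congr 1
        have h2 : ((1:ℝ≥0∞) - 2⁻¹)⁻¹ = 2 := by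
          rw [ENNReal.one_sub_inv_two]; simp
        rw [h2, ← ENNReal.ofReal_ofNat 2, ← ENNReal.ofReal_mul (by positivity)]
        congr 1
        have h3 : (2:ℝ) ^ (N-1) * 2 = 2 ^ N := by
          rw [← pow_succ]; congr 1; omega
        rw [mul_assoc, h3]; ring

noncomputable def isoC (N : ℕ) : ℝ≥0∞ := ENNReal.ofReal (2 ^ N) * unitVol N + 1

lemma isoC_ne_top (N : ℕ) : isoC N ≠ ∞ := by
  have : unitVol N ≠ ∞ := measure_ball_lt_top.ne
  simp [isoC, ENNReal.add_ne_top, ENNReal.mul_ne_top, this]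

lemma isoC_ne_zero (N : ℕ) : isoC N ≠ 0 := by
  simp [isoC]

lemma pot_bound {N : ℕ} (hN : 2 ≤ N) {s : Set (EuclideanSpace ℝ (Fin N))}
    (hs : MeasurableSet s) (h0 : volume s ≠ 0) (hfin : volume s ≠ ∞)
    (x : EuclideanSpace ℝ (Fin N)) :
    ∫⁻ y in s, (‖x - y‖₊ : ℝ≥0∞) ^ (-((N:ℝ) - 1))
      ≤ isoC N * (volume s) ^ ((N:ℝ)⁻¹) := by
  set m := volume s with hm
  set ρ : ℝ≥0∞ := m ^ ((N:ℝ)⁻¹) with hρ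
  have hNpos : (0:ℝ) < N := by positivity
  have hρ0 : ρ ≠ 0 := by
    simp only [hρ, Ne, ENNReal.rpow_eq_zero_iff, not_or, not_and_or]
    exact ⟨Or.inl h0, Or.inl hfin⟩
  have hρtop : ρ ≠ ∞ := by
    simp only [hρ, Ne, ENNReal.rpow_eq_top_iff, not_or, not_and_or]
    exact ⟨Or.inl h0, Or.inl hfin⟩
  set R := ρ.toReal with hRdef
  have hR : 0 < R := ENNReal.toReal_pos hρ0 hρtop
  have hofR : ENNReal.ofReal R = ρ := ENNReal.ofReal_toReal hρtop
  have hsplit : s ⊆ ball x R ∪ (s \ ball x R) := by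
    intro y hy
    by_cases hyb : y ∈ ball x R
    · exact Or.inl hyb
    · exact Or.inr ⟨hy, hyb⟩
  have hterm2 : ∫⁻ y in s \ ball x R, (‖x - y‖₊ : ℝ≥0∞) ^ (-((N:ℝ) - 1)) ≤ ρ := by
    have hbd : ∀ y ∈ s \ ball x R,
        (‖x - y‖₊ : ℝ≥0∞) ^ (-((N:ℝ) - 1)) ≤ ENNReal.ofReal (R ^ (-((N:ℝ) - 1))) := by
      intro y hy
      exact ker_le hN hR (by simpa [mem_ball, not_lt] using hy.2)
    calc ∫⁻ y in s \ ball x R, (‖x - y‖₊ : ℝ≥0∞) ^ (-((N:ℝ) - 1))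
        ≤ ∫⁻ _ in s \ ball x R, ENNReal.ofReal (R ^ (-((N:ℝ) - 1))) :=
          setLIntegral_mono' (hs.diff measurableSet_ball) hbd
      _ = ENNReal.ofReal (R ^ (-((N:ℝ) - 1))) * volume (s \ ball x R) :=
          setLIntegral_const _ _
      _ ≤ ENNReal.ofReal (R ^ (-((N:ℝ) - 1))) * m :=
          mul_le_mul_right (measure_mono Set.diff_subset) _
      _ = ρ ^ (-((N:ℝ) - 1)) * m := by
          rw [← hofR, ENNReal.ofReal_rpow_of_pos hR]
      _ = m ^ ((N:ℝ)⁻¹ * -((N:ℝ) - 1)) * m ^ (1:ℝ) := by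
          rw [ENNReal.rpow_mul, ENNReal.rpow_one]
      _ = m ^ ((N:ℝ)⁻¹ * -((N:ℝ) - 1) + 1) := (ENNReal.rpow_add _ _ h0 hfin).symm
      _ = ρ := by
          rw [hρ]
          congr 1
          field_simp
          ring
  calc ∫⁻ y in s, (‖x - y‖₊ : ℝ≥0∞) ^ (-((N:ℝ) - 1))
      ≤ ∫⁻ y in ball x R ∪ (s \ ball x R), (‖x - y‖₊ : ℝ≥0∞) ^ (-((N:ℝ) - 1)) :=
        lintegral_mono_set hsplit
    _ ≤ (∫⁻ y in ball x R, (‖x - y‖₊ : ℝ≥0∞) ^ (-((N:ℝ) - 1)))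
          + ∫⁻ y in s \ ball x R, (‖x - y‖₊ : ℝ≥0∞) ^ (-((N:ℝ) - 1)) :=
        lintegral_union_le _ _ _
    _ ≤ ENNReal.ofReal (2 ^ N * R) * unitVol N + ρ :=
        add_le_add (lintegral_ball_ker hN x hR) hterm2
    _ = (ENNReal.ofReal (2 ^ N) * unitVol N) * ρ + 1 * ρ := by
        rw [ENNReal.ofReal_mul (by positivity), one_mul, hofR]
        ring
    _ = isoC N * ρ := by rw [isoC, add_mul]

lemma cap_lb {N : ℕ} (hN : 2 ≤ N) {K A : Set (EuclideanSpace ℝ (Fin N))}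
    (hK : IsCompact K) (hKA : K ⊆ A) :
    volume K ^ (((N:ℝ) - 1) / N) ≤ isoC N * rieszCap N A := by
  have hNpos : (0:ℝ) < N := by positivity
  have hN1 : (0:ℝ) < (N:ℝ) - 1 := by
    have : (2:ℝ) ≤ N := by exact_mod_cast hN
    linarith
  have hp : (0:ℝ) < ((N:ℝ) - 1) / N := div_pos hN1 hNpos
  rcases eq_or_ne (volume K) 0 with h0 | h0
  · rw [h0, ENNReal.zero_rpow_of_pos hp]
    exact zero_le
  have hfin : volume K ≠ ∞ := hK.measure_lt_top.ne
  set m := volume K with hm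
  set c : ℝ≥0∞ := (isoC N * m ^ ((N:ℝ)⁻¹))⁻¹ with hc
  have hm1 : m ^ ((N:ℝ)⁻¹) ≠ 0 := by
    simp only [Ne, ENNReal.rpow_eq_zero_iff, not_or, not_and_or]
    exact ⟨Or.inl h0, Or.inl hfin⟩
  have hm2 : m ^ ((N:ℝ)⁻¹) ≠ ∞ := by
    simp only [Ne, ENNReal.rpow_eq_top_iff, not_or, not_and_or]
    exact ⟨Or.inl h0, Or.inl hfin⟩
  have hden0 : isoC N * m ^ ((N:ℝ)⁻¹) ≠ 0 := mul_ne_zero (isoC_ne_zero N) hm1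
  have hdentop : isoC N * m ^ ((N:ℝ)⁻¹) ≠ ∞ := ENNReal.mul_ne_top (isoC_ne_top N) hm2
  set ν : Measure (EuclideanSpace ℝ (Fin N)) := c • volume.restrict K with hν
  have hνK : ν K = c * m := by
    rw [hν, Measure.smul_apply, smul_eq_mul, Measure.restrict_apply_self]
  have hcomp : ν Kᶜ = 0 := by
    rw [hν, Measure.smul_apply, smul_eq_mul, Measure.restrict_apply (MeasurableSet.compl hK.measurableSet),
      Set.compl_inter_self, measure_empty, mul_zero]
  have hpot : ∀ x : EuclideanSpace ℝ (Fin N),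
      (∫⁻ y, (‖x - y‖₊ : ℝ≥0∞) ^ (-(N - 1 : ℝ)) ∂ν) ≤ 1 := by
    intro x
    rw [hν, lintegral_smul_measure]
    calc c * ∫⁻ y in K, (‖x - y‖₊ : ℝ≥0∞) ^ (-((N:ℝ) - 1))
        ≤ c * (isoC N * m ^ ((N:ℝ)⁻¹)) :=
          mul_le_mul_right (pot_bound hN hK.measurableSet h0 hfin x) _
      _ = 1 := ENNReal.inv_mul_cancel hden0 hdentop
  have hle : ν K ≤ rieszCap N A := by
    rw [rieszCap]
    refine le_trans ?_ (le_iSup _ K)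
    refine le_trans ?_ (le_iSup_of_le hK le_rfl)
    refine le_trans ?_ (le_iSup_of_le hKA le_rfl)
    refine le_trans ?_ (le_iSup _ ν)
    refine le_trans ?_ (le_iSup_of_le hcomp le_rfl)
    exact le_iSup_of_le hpot le_rfl
  have hkey : m ^ (((N:ℝ) - 1) / N) = isoC N * ν K := by
    rw [hνK, hc, ENNReal.mul_inv (Or.inl (isoC_ne_zero N)) (Or.inl (isoC_ne_top N)),
      ← mul_assoc, ← mul_assoc, ENNReal.mul_inv_cancel (isoC_ne_zero N) (isoC_ne_top N),
      one_mul]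
    calc m ^ (((N:ℝ) - 1) / N) = m ^ (-(N:ℝ)⁻¹ + 1) := by
          congr 1
          field_simp
          ring
      _ = m ^ (-(N:ℝ)⁻¹) * m ^ (1:ℝ) := ENNReal.rpow_add _ _ h0 hfin
      _ = (m ^ ((N:ℝ)⁻¹))⁻¹ * m := by rw [ENNReal.rpow_neg, ENNReal.rpow_one]
  rw [hkey]
  exact mul_le_mul_right hle _

lemma iSup_rpow_comm {ι : Sort*} (f : ι → ℝ≥0∞) {p : ℝ} (hp : 0 < p) :
    (⨆ i, f i) ^ p = ⨆ i, (f i) ^ p := by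
  exact (ENNReal.orderIsoRpow p hp).map_iSup f

lemma iso_ineq {N : ℕ} (hN : 2 ≤ N) {A : Set (EuclideanSpace ℝ (Fin N))}
    (hA : MeasurableSet A) (hfin : volume A ≠ ∞) :
    volume A ^ (((N:ℝ) - 1) / N) ≤ isoC N * rieszCap N A := by
  have hNpos : (0:ℝ) < N := by positivity
  have hN1 : (0:ℝ) < (N:ℝ) - 1 := by
    have : (2:ℝ) ≤ N := by exact_mod_cast hN
    linarith
  have hp : (0:ℝ) < ((N:ℝ) - 1) / N := div_pos hN1 hNpos
  rw [hA.measure_eq_iSup_isCompact_of_ne_top hfin]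
  rw [iSup_rpow_comm _ hp]
  refine iSup_le fun K => ?_
  rw [iSup_rpow_comm _ hp]
  refine iSup_le fun hKA => ?_
  rw [iSup_rpow_comm _ hp]
  refine iSup_le fun hK => ?_
  exact cap_lb hN hK hKA


theorem capacity_differentiability_implies_weak_differentiability
    (N : ℕ) (hN : 2 ≤ N)
    (u : EuclideanSpace ℝ (Fin N) → ℝ) (hu : Measurable u)
    (a : EuclideanSpace ℝ (Fin N)) (v : EuclideanSpace ℝ (Fin N))
    (hcap : Tendsto (fun r : ℝ =>
        (ENNReal.ofReal (r ^ (N - 1)))⁻¹ *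
          ⨆ (t : ℝ) (_ : 0 < t), ENNReal.ofReal t *
            rieszCap N {x | x ∈ ball a r ∧
              t * ‖x - a‖ < |u x - u a - ∑ i, v i * (x - a) i|})
      (𝓝[>] (0 : ℝ)) (𝓝 0)) :
    Tendsto (fun r : ℝ =>
        (ENNReal.ofReal (r ^ (N - 1)))⁻¹ *
          ⨆ (t : ℝ) (_ : 0 < t), ENNReal.ofReal t *
            (volume {x | x ∈ ball a r ∧
                t * ‖x - a‖ < |u x - u a - ∑ i, v i * (x - a) i|}) ^ ((N - 1 : ℝ) / N))
      (𝓝[>] (0 : ℝ)) (𝓝 0) := by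
  set S : ℝ → ℝ → Set (EuclideanSpace ℝ (Fin N)) := fun r t =>
    {x | x ∈ ball a r ∧ t * ‖x - a‖ < |u x - u a - ∑ i, v i * (x - a) i|} with hS
  set G : ℝ → ℝ≥0∞ := fun r => (ENNReal.ofReal (r ^ (N - 1)))⁻¹ *
      ⨆ (t : ℝ) (_ : 0 < t), ENNReal.ofReal t * rieszCap N (S r t) with hG
  set F : ℝ → ℝ≥0∞ := fun r => (ENNReal.ofReal (r ^ (N - 1)))⁻¹ *
      ⨆ (t : ℝ) (_ : 0 < t), ENNReal.ofReal t * (volume (S r t)) ^ ((N - 1 : ℝ) / N) with hF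
  have hSmeas : ∀ r t, MeasurableSet (S r t) := by
    intro r t
    have h1 : Measurable fun x : EuclideanSpace ℝ (Fin N) => t * ‖x - a‖ :=
      (continuous_const.mul ((continuous_id.sub continuous_const).norm)).measurable
    have hsum : Continuous fun x : EuclideanSpace ℝ (Fin N) => ∑ i, v i * (x - a) i := by
      apply continuous_finset_sum
      intro i _
      exact continuous_const.mul ((continuous_apply i).comp (Continuous.comp (PiLp.continuous_ofLp 2 _) (continuous_sub_right a)))
    have h2 : Measurable fun x : EuclideanSpace ℝ (Fin N) =>
        |u x - u a - ∑ i, v i * (x - a) i| :=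
      ((hu.sub measurable_const).sub hsum.measurable).abs
    exact measurableSet_ball.inter (measurableSet_lt h1 h2)
  have hSfin : ∀ r t, volume (S r t) ≠ ∞ := by
    intro r t
    exact ((measure_mono (fun x hx => hx.1)).trans_lt measure_ball_lt_top).ne
  have hle : ∀ r : ℝ, F r ≤ isoC N * G r := by
    intro r
    rw [hF, hG]
    calc (ENNReal.ofReal (r ^ (N - 1)))⁻¹ *
          ⨆ (t : ℝ) (_ : 0 < t), ENNReal.ofReal t * (volume (S r t)) ^ ((N - 1 : ℝ) / N)
        ≤ (ENNReal.ofReal (r ^ (N - 1)))⁻¹ *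
          ⨆ (t : ℝ) (_ : 0 < t), isoC N * (ENNReal.ofReal t * rieszCap N (S r t)) := by
          refine mul_le_mul_right (iSup_mono fun t => iSup_mono fun ht => ?_) _
          calc ENNReal.ofReal t * (volume (S r t)) ^ ((N - 1 : ℝ) / N)
              ≤ ENNReal.ofReal t * (isoC N * rieszCap N (S r t)) :=
                mul_le_mul_right (iso_ineq hN (hSmeas r t) (hSfin r t)) _
            _ = isoC N * (ENNReal.ofReal t * rieszCap N (S r t)) := by ring
      _ = isoC N * ((ENNReal.ofReal (r ^ (N - 1)))⁻¹ *
          ⨆ (t : ℝ) (_ : 0 < t), ENNReal.ofReal t * rieszCap N (S r t)) := by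
          simp_rw [← ENNReal.mul_iSup]
          ring
  have h1 : Tendsto (fun r => isoC N * G r) (𝓝[>] (0:ℝ)) (𝓝 (isoC N * 0)) :=
    ENNReal.Tendsto.const_mul hcap (Or.inr (isoC_ne_top N))
  rw [mul_zero] at h1
  exact tendsto_of_tendsto_of_tendsto_of_le_of_le tendsto_const_nhds h1
    (fun r => zero_le) hle
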